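/- For all integers k ≥ 1 and m ≥ 1, the commutator [c_k, x_2] = [x_2, x_3, …, x_3, x_2] (with k occurrences of x_3) does not belong to S_m. -/

import Mathlib

/- STATEMENT 16: in K⟨x₂,x₃⟩ (x₂ = ι K 0, x₃ = ι K 1), for all k ≥ 1 and m ≥ 1 the
   commutator [c_k, x₂] does not belong to S_m, where c₁ = [x₂,x₃], c_{k+1} = [c_k,x₃],
   S₁ = S is the invariant algebra of the U₂-action and
   S_{m+1} = { f : f^φ − f ∈ S_m for all φ in the U₂-action }.
   (Below `c K k` is the paper's c_{k+1}, and `SS K m` is the paper's S_m, with the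
   convention `SS K 0 = {0}` so that `SS K 1 = S`.) -/

noncomputable section
open FreeAlgebra

abbrev A2 (K : Type) [Field K] := FreeAlgebra K (Fin 2)

/-- the commutators c₁ = [x₂,x₃], c_{k+1} = [c_k,x₃]; `c K k` is the paper's c_{k+1}. -/
def c (K : Type) [Field K] : ℕ → A2 K
  | 0 => ι K 0 * ι K 1 - ι K 1 * ι K 0
  | k + 1 => c K k * ι K 1 - ι K 1 * c K k

/-- `SS K m` is the paper's `S_m` for `m ≥ 1` (with `SS K 0 = {0}`, so `SS K 1 = S`). -/
def SS (K : Type) [Field K] : ℕ → Set (A2 K)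
  | 0 => {0}
  | m + 1 => {f | ∀ g ∈ Algebra.adjoin K ({ι K 1} : Set (A2 K)), ∀ h : K,
      (FreeAlgebra.lift K ![ι K 0 + g, ι K 1 + algebraMap K (A2 K) h]) f - f ∈ SS K m}

variable (K : Type) [Field K] [CharZero K]

def φ (g : A2 K) (h : K) : A2 K →ₐ[K] A2 K :=
  FreeAlgebra.lift K ![ι K 0 + g, ι K 1 + algebraMap K (A2 K) h]

lemma mem_SS_succ {f : A2 K} {m : ℕ} :
    f ∈ SS K (m+1) ↔ ∀ g ∈ Algebra.adjoin K ({ι K 1} : Set (A2 K)), ∀ h : K,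
      φ K g h f - f ∈ SS K m := Iff.rfl

@[simp] lemma φ_x2 (g : A2 K) (h : K) : φ K g h (ι K 0) = ι K 0 + g := by
  simp [φ]

@[simp] lemma φ_x3 (g : A2 K) (h : K) : φ K g h (ι K 1) = ι K 1 + algebraMap K (A2 K) h := by
  simp [φ]

set_option linter.unusedSectionVars false

lemma SS_zero : ∀ m : ℕ, (0 : A2 K) ∈ SS K m
  | 0 => rfl
  | m + 1 => fun g hg h => by simpa using SS_zero m

lemma SS_add : ∀ m : ℕ, ∀ {f f' : A2 K}, f ∈ SS K m → f' ∈ SS K m → f + f' ∈ SS K m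
  | 0, f, f', hf, hf' => by
      simp only [SS, Set.mem_singleton_iff] at *; rw [hf, hf', add_zero]
  | m + 1, f, f', hf, hf' => fun g hg h => by
      have := SS_add m (hf g hg h) (hf' g hg h)
      simpa [map_add, sub_add_sub_comm] using this

lemma SS_smul : ∀ m : ℕ, ∀ {f : A2 K} (a : K), f ∈ SS K m → a • f ∈ SS K m
  | 0, f, a, hf => by
      simp only [SS, Set.mem_singleton_iff] at *; rw [hf, smul_zero]
  | m + 1, f, a, hf => fun g hg h => by
      have := SS_smul m a (hf g hg h)
      simpa [map_smul, smul_sub] using this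

lemma SS_sub (m : ℕ) {f f' : A2 K} (hf : f ∈ SS K m) (hf' : f' ∈ SS K m) :
    f - f' ∈ SS K m := by
  have := SS_add K m hf (SS_smul K m (-1) hf')
  simpa [sub_eq_add_neg] using this

lemma SS_mono : ∀ m : ℕ, SS K m ⊆ SS K (m + 1)
  | 0 => fun f hf => by
      simp only [SS, Set.mem_singleton_iff] at hf
      subst hf; exact SS_zero K 1
  | m + 1 => fun f hf g hg h => SS_mono m (hf g hg h)

lemma SS_le {m n : ℕ} (hmn : m ≤ n) : SS K m ⊆ SS K n := by
  induction n with
  | zero => simpa [Nat.le_zero.mp hmn] using subset_rfl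
  | succ n ih =>
      rcases Nat.lt_or_ge m (n+1) with hlt | hge
      · exact (ih (Nat.lt_succ_iff.mp hlt)).trans (SS_mono K n)
      · have : m = n + 1 := le_antisymm hmn hge
        subst this; exact subset_rfl

lemma φ_c (g : A2 K) (hg : g ∈ Algebra.adjoin K ({ι K 1} : Set (A2 K))) (h : K) :
    ∀ t, φ K g h (c K t) = c K t := by
  have hcomm : ι K 1 * g = g * ι K 1 :=
    (Algebra.commute_of_mem_adjoin_self hg).eq
  intro t
  induction t with
  | zero =>
      simp only [c, map_sub, map_mul, φ_x2, φ_x3]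
      linear_combination (norm := noncomm_ring) -hcomm
        - Algebra.commutes (A := A2 K) h (ι K 0) - Algebra.commutes (A := A2 K) h g
  | succ t ih =>
      simp only [c, map_sub, map_mul, φ_x3, ih]
      linear_combination (norm := noncomm_ring) - Algebra.commutes (A := A2 K) h (c K t)

lemma x3_mul_mem : ∀ m : ℕ, ∀ {f : A2 K}, f ∈ SS K m → ι K 1 * f ∈ SS K (m + 1)
  | 0, f, hf => by
      simp only [SS, Set.mem_singleton_iff] at hf
      subst hf; simpa using SS_zero K 1
  | m + 1, f, hf => fun g hg h => by
      show φ K g h (ι K 1 * f) - ι K 1 * f ∈ SS K (m + 1)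
      have h1 : ι K 1 * (φ K g h f - f) ∈ SS K (m + 1) := x3_mul_mem m (hf g hg h)
      have h2 : h • (φ K g h f - f) ∈ SS K (m + 1) :=
        SS_mono K m (SS_smul K m h (hf g hg h))
      have h3 : h • f ∈ SS K (m + 1) := SS_smul K (m+1) h hf
      have key : φ K g h (ι K 1 * f) - ι K 1 * f
          = ι K 1 * (φ K g h f - f) + h • (φ K g h f - f) + h • f := by
        rw [map_mul, φ_x3]
        rw [Algebra.smul_def, Algebra.smul_def]
        noncomm_ring
      rw [key]
      exact SS_add K (m+1) (SS_add K (m+1) h1 h2) h3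

lemma mul_x3_mem : ∀ m : ℕ, ∀ {f : A2 K}, f ∈ SS K m → f * ι K 1 ∈ SS K (m + 1)
  | 0, f, hf => by
      simp only [SS, Set.mem_singleton_iff] at hf
      subst hf; simpa using SS_zero K 1
  | m + 1, f, hf => fun g hg h => by
      show φ K g h (f * ι K 1) - f * ι K 1 ∈ SS K (m + 1)
      have h1 : (φ K g h f - f) * ι K 1 ∈ SS K (m + 1) := mul_x3_mem m (hf g hg h)
      have h2 : h • (φ K g h f - f) ∈ SS K (m + 1) :=
        SS_mono K m (SS_smul K m h (hf g hg h))
      have h3 : h • f ∈ SS K (m + 1) := SS_smul K (m+1) h hf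
      have key : φ K g h (f * ι K 1) - f * ι K 1
          = (φ K g h f - f) * ι K 1 + h • (φ K g h f - f) + h • f := by
        rw [map_mul, φ_x3]
        rw [Algebra.smul_def, Algebra.smul_def]
        linear_combination (norm := noncomm_ring) -(Algebra.commutes (A := A2 K) h (φ K g h f))
      rw [key]
      exact SS_add K (m+1) (SS_add K (m+1) h1 h2) h3

lemma c_mem_SS1 (t : ℕ) : c K t ∈ SS K 1 := fun g hg h => by
  show φ K g h (c K t) - c K t ∈ SS K 0
  rw [φ_c K g hg h t, sub_self]; exact SS_zero K 0

lemma x3pow_c_mem : ∀ i t : ℕ, (ι K 1) ^ i * c K t ∈ SS K (i + 1)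
  | 0, t => by simpa using c_mem_SS1 K t
  | i + 1, t => by
      have := x3_mul_mem K (i+1) (x3pow_c_mem i t)
      simpa [pow_succ', mul_assoc] using this

lemma SS_mem_zero_iff {f : A2 K} : f ∈ SS K 0 ↔ f = 0 := Iff.rfl

lemma SS_nsmul (m : ℕ) {f : A2 K} (n : ℕ) (hf : f ∈ SS K m) : n • f ∈ SS K m := by
  rw [← Nat.cast_smul_eq_nsmul K]
  exact SS_smul K m _ hf

lemma commA : ∀ n t : ℕ, c K t * (ι K 1) ^ (n+1) - (ι K 1) ^ (n+1) * c K t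
    - (n+1) • ((ι K 1) ^ n * c K (t+1)) ∈ SS K n
  | 0, t => by
      rw [SS_mem_zero_iff]
      simp only [c, zero_add, pow_one, pow_zero, one_smul, one_mul]
      abel
  | n + 1, t => by
      have key : c K t * (ι K 1) ^ (n+2) - (ι K 1) ^ (n+2) * c K t
          - (n+2) • ((ι K 1) ^ (n+1) * c K (t+1))
          = ι K 1 * (c K t * (ι K 1) ^ (n+1) - (ι K 1) ^ (n+1) * c K t
              - (n+1) • ((ι K 1) ^ n * c K (t+1)))
            + ((c K (t+1) * (ι K 1) ^ (n+1) - (ι K 1) ^ (n+1) * c K (t+1)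
              - (n+1) • ((ι K 1) ^ n * c K (t+2)))
            + (n+1) • ((ι K 1) ^ n * c K (t+2))) := by
        have hswap : ∀ z : A2 K, ι K 1 * (ι K 1 ^ n * z) = ι K 1 ^ n * (ι K 1 * z) := fun z => by
          rw [← mul_assoc, ← pow_succ', pow_succ, mul_assoc]
        simp only [show c K (t+2) = c K (t+1) * ι K 1 - ι K 1 * c K (t+1) from rfl,
          show c K (t+1) = c K t * ι K 1 - ι K 1 * c K t from rfl]
        rw [show n+2 = (n+1)+1 from rfl]
        simp only [pow_succ, mul_sub, sub_mul, mul_add, add_mul, smul_sub, smul_add,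
          mul_smul_comm, smul_mul_assoc, mul_assoc, succ_nsmul, hswap]
        abel
      rw [key]
      exact SS_add K (n+1)
        (x3_mul_mem K n (commA n t))
        (SS_add K (n+1) (SS_mono K n (commA n (t+1)))
          (SS_nsmul K (n+1) (n+1) (x3pow_c_mem K n (t+2))))

lemma commG : ∀ n t : ℕ, ((ι K 1 + 1) ^ (n+1) - (ι K 1) ^ (n+1)) * c K t
    - (n+1) • ((ι K 1) ^ n * c K t) ∈ SS K n
  | 0, t => by
      rw [SS_mem_zero_iff]
      simp only [zero_add, pow_one, pow_zero, one_smul, one_mul]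
      noncomm_ring
  | n + 1, t => by
      have key : ((ι K 1 + 1) ^ (n+2) - (ι K 1) ^ (n+2)) * c K t
          - (n+2) • ((ι K 1) ^ (n+1) * c K t)
          = ι K 1 * (((ι K 1 + 1) ^ (n+1) - (ι K 1) ^ (n+1)) * c K t
              - (n+1) • ((ι K 1) ^ n * c K t))
            + ((((ι K 1 + 1) ^ (n+1) - (ι K 1) ^ (n+1)) * c K t
              - (n+1) • ((ι K 1) ^ n * c K t))
            + (n+1) • ((ι K 1) ^ n * c K t)) := by
        have hswap : ∀ z : A2 K, ι K 1 * (ι K 1 ^ n * z) = ι K 1 ^ n * (ι K 1 * z) := fun z => by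
          rw [← mul_assoc, ← pow_succ', pow_succ, mul_assoc]
        have hswap2 : ∀ z : A2 K, ι K 1 * ((ι K 1 + 1) ^ n * z)
            = (ι K 1 + 1) ^ n * (ι K 1 * z) := fun z => by
          rw [← mul_assoc,
            (((Commute.refl (ι K 1)).add_right (Commute.one_right _)).pow_right n).eq, mul_assoc]
        rw [show n+2 = (n+1)+1 from rfl]
        simp only [pow_succ, mul_sub, sub_mul, mul_add, add_mul, smul_sub, smul_add,
          mul_smul_comm, smul_mul_assoc, mul_assoc, succ_nsmul, one_mul, mul_one, hswap, hswap2]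
        abel
      rw [key]
      exact SS_add K (n+1)
        (x3_mul_mem K n (commG n t))
        (SS_add K (n+1) (SS_mono K n (commG n t))
          (SS_nsmul K (n+1) (n+1) (x3pow_c_mem K n t)))

def ψ : A2 K →ₐ[K] Matrix (Fin 2) (Fin 2) K :=
  FreeAlgebra.lift K ![Matrix.single 0 1 (1:K), Matrix.single 1 1 (1:K)]

lemma stdmul_ne : Matrix.single (1:Fin 2) (1:Fin 2) (1:K)
    * Matrix.single (0:Fin 2) (1:Fin 2) (1:K) = 0 :=
  Matrix.single_mul_single_of_ne (c := (1:K)) (i := (1:Fin 2)) (j := (1:Fin 2)) (k := (0:Fin 2)) (h := by decide) (d := (1:K))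

lemma stdmul_same : Matrix.single (0:Fin 2) (1:Fin 2) (1:K)
    * Matrix.single (1:Fin 2) (1:Fin 2) (1:K)
    = Matrix.single (0:Fin 2) (1:Fin 2) (1:K) := by
  rw [Matrix.single_mul_single_same, mul_one]

lemma ψ_c : ∀ t : ℕ, ψ K (c K t) = Matrix.single 0 1 (1:K)
  | 0 => by
      show ψ K (ι K 0 * ι K 1 - ι K 1 * ι K 0) = _
      rw [map_sub, map_mul, map_mul]
      simp only [ψ, lift_ι_apply, Matrix.cons_val_zero, Matrix.cons_val_one, Matrix.head_cons]
      rw [stdmul_same, stdmul_ne, sub_zero]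
  | t + 1 => by
      show ψ K (c K t * ι K 1 - ι K 1 * c K t) = _
      rw [map_sub, map_mul, map_mul, ψ_c t]
      simp only [ψ, lift_ι_apply, Matrix.cons_val_one, Matrix.head_cons, Matrix.cons_val_zero]
      rw [stdmul_same, stdmul_ne, sub_zero]

lemma c_ne_zero (t : ℕ) : c K t ≠ 0 := by
  intro h0
  have := ψ_c K t
  rw [h0, map_zero] at this
  have h1 := congrFun (congrFun this.symm 0) 1
  simp [Matrix.single] at h1

lemma not_mem_SS : ∀ s t : ℕ, (ι K 1) ^ s * c K t ∉ SS K s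
  | 0, t => fun hmem => by
      rw [SS_mem_zero_iff] at hmem
      exact c_ne_zero K t (by simpa using hmem)
  | s + 1, t => fun hmem => by
      have hD := hmem 0 (zero_mem _) 1
      have hφ : (FreeAlgebra.lift K ![ι K 0 + 0, ι K 1 + algebraMap K (A2 K) 1])
            ((ι K 1) ^ (s+1) * c K t)
          = (ι K 1 + 1) ^ (s+1) * c K t := by
        show φ K 0 1 ((ι K 1) ^ (s+1) * c K t) = _
        rw [map_mul, map_pow, φ_x3, φ_c K 0 (zero_mem _) 1 t, map_one]
      rw [hφ, ← sub_mul] at hD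
      have hsub := SS_sub K s hD (commG K s t)
      have : ((s:K) + 1) • ((ι K 1) ^ s * c K t) ∈ SS K s := by
        have : ((ι K 1 + 1) ^ (s+1) - ι K 1 ^ (s+1)) * c K t
            - (((ι K 1 + 1) ^ (s+1) - ι K 1 ^ (s+1)) * c K t
              - (s+1) • (ι K 1 ^ s * c K t))
            = ((s:K) + 1) • ((ι K 1) ^ s * c K t) := by
          rw [sub_sub_cancel, ← Nat.cast_smul_eq_nsmul K]
          push_cast
          ring_nf
        rwa [this] at hsub
      have hne : ((s:K) + 1) ≠ 0 := by
        have := Nat.cast_add_one_ne_zero (R := K) s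
        simpa using this
      have hfin : (ι K 1) ^ s * c K t ∈ SS K s := by
        have := SS_smul K s ((s:K)+1)⁻¹ this
        rwa [inv_smul_smul₀ hne] at this
      exact not_mem_SS s t hfin

set_option linter.all false in
theorem comm_ck_x2_not_in_Sm (K : Type) [Field K] [CharZero K] (k m : ℕ) (hm : 1 ≤ m) :
    c K k * ι K 0 - ι K 0 * c K k ∉ SS K m := by
  obtain ⟨m', rfl⟩ : ∃ m', m = m' + 1 := ⟨m - 1, by omega⟩
  intro hmem
  have hg : (ι K 1) ^ (m'+1) ∈ Algebra.adjoin K ({ι K 1} : Set (A2 K)) :=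
    pow_mem (Algebra.self_mem_adjoin_singleton K _) _
  have hD := hmem ((ι K 1) ^ (m'+1)) hg 0
  have hφ : (FreeAlgebra.lift K ![ι K 0 + (ι K 1) ^ (m'+1), ι K 1 + algebraMap K (A2 K) 0])
        (c K k * ι K 0 - ι K 0 * c K k)
      = c K k * (ι K 0 + (ι K 1) ^ (m'+1)) - (ι K 0 + (ι K 1) ^ (m'+1)) * c K k := by
    show φ K ((ι K 1) ^ (m'+1)) 0 _ = _
    rw [map_sub, map_mul, map_mul, φ_x2, φ_c K _ hg 0 k]
  rw [hφ] at hD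
  have hD' : c K k * (ι K 1) ^ (m'+1) - (ι K 1) ^ (m'+1) * c K k ∈ SS K m' := by
    have heq : c K k * (ι K 0 + (ι K 1) ^ (m'+1)) - (ι K 0 + (ι K 1) ^ (m'+1)) * c K k
        - (c K k * ι K 0 - ι K 0 * c K k)
        = c K k * (ι K 1) ^ (m'+1) - (ι K 1) ^ (m'+1) * c K k := by
      noncomm_ring
    rwa [heq] at hD
  have hsub := SS_sub K m' hD' (commA K m' k)
  rw [sub_sub_cancel] at hsub
  have hne : ((m':K) + 1) ≠ 0 := by
    have := Nat.cast_add_one_ne_zero (R := K) m'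
    simpa using this
  have hfin : (ι K 1) ^ m' * c K (k+1) ∈ SS K m' := by
    rw [← Nat.cast_smul_eq_nsmul K] at hsub
    push_cast at hsub
    have := SS_smul K m' ((m':K)+1)⁻¹ hsub
    rwa [inv_smul_smul₀ hne] at this
  exact not_mem_SS K m' (k+1) hfin
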